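/- Side-information switching inequality: let U, W, Ẇ, Z, S be finitely-valued random variables such that Ẇ → W → (U, S) → Z is a Markov chain (Ẇ is a degraded version of W, and Z depends on (W, Ẇ) only through (U,S)), and S takes values in a set of size q_e. Then I(U; Z | W) ≤ I(U; Z | Ẇ) + log₂ q_e. -/

import Mathlib

open Finset

section IT
variable {Ω : Type} [Fintype Ω]

/-- Probability that random variable `X` takes the value `x` under pmf `p`. -/
def pm {α : Type} [Fintype α] [DecidableEq α] (p : Ω → ℝ) (X : Ω → α) (x : α) : ℝ :=
  ∑ ω, if X ω = x then p ω else 0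

/-- Shannon entropy (in bits) of random variable `X` under pmf `p`. -/
noncomputable def ent {α : Type} [Fintype α] [DecidableEq α] (p : Ω → ℝ) (X : Ω → α) : ℝ :=
  -∑ x, pm p X x * Real.logb 2 (pm p X x)

/-- Mutual information `I(X;Y)` (in bits). -/
noncomputable def mi {α β : Type} [Fintype α] [DecidableEq α] [Fintype β] [DecidableEq β]
    (p : Ω → ℝ) (X : Ω → α) (Y : Ω → β) : ℝ :=
  ent p X + ent p Y - ent p (fun ω => (X ω, Y ω))

/-- Conditional entropy `H(X | Y)` (in bits). -/
noncomputable def condEnt {α β : Type} [Fintype α] [DecidableEq α] [Fintype β] [DecidableEq β]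
    (p : Ω → ℝ) (X : Ω → α) (Y : Ω → β) : ℝ :=
  ent p (fun ω => (X ω, Y ω)) - ent p Y

/-- Conditional mutual information `I(X;Y | Z)` (in bits). -/
noncomputable def cmi {α β γ : Type} [Fintype α] [DecidableEq α] [Fintype β] [DecidableEq β]
    [Fintype γ] [DecidableEq γ] (p : Ω → ℝ) (X : Ω → α) (Y : Ω → β) (Z : Ω → γ) : ℝ :=
  ent p (fun ω => (X ω, Z ω)) + ent p (fun ω => (Y ω, Z ω))
    - ent p (fun ω => (X ω, Y ω, Z ω)) - ent p Z

/-- `p` is a probability mass function on the finite sample space `Ω`. -/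
def IsPMF (p : Ω → ℝ) : Prop := (∀ ω, 0 ≤ p ω) ∧ ∑ ω, p ω = 1

/-- `X` and `Z` are conditionally independent given `Y` (i.e. `X → Y → Z` is a Markov chain). -/
def CondIndep {α β γ : Type} [Fintype α] [DecidableEq α] [Fintype β] [DecidableEq β]
    [Fintype γ] [DecidableEq γ] (p : Ω → ℝ) (X : Ω → α) (Z : Ω → γ) (Y : Ω → β) : Prop :=
  ∀ x z y, pm p (fun ω => (X ω, Z ω, Y ω)) (x, z, y) * pm p Y y =
    pm p (fun ω => (X ω, Y ω)) (x, y) * pm p (fun ω => (Z ω, Y ω)) (z, y)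

end IT


section ITA
open Finset
variable {Ω : Type} [Fintype Ω]
variable {α β γ : Type} [Fintype α] [DecidableEq α] [Fintype β] [DecidableEq β]
  [Fintype γ] [DecidableEq γ] {p : Ω → ℝ}

lemma pm_nonneg (hp : IsPMF p) (X : Ω → α) (x : α) : 0 ≤ pm p X x :=
  Finset.sum_nonneg fun ω _ => by split <;> simp [hp.1 ω]

lemma exp_eq (X : Ω → α) (g : α → ℝ) :
    ∑ x, pm p X x * g x = ∑ ω, p ω * g (X ω) := by
  unfold pm
  simp only [Finset.sum_mul, ite_mul, zero_mul]
  rw [Finset.sum_comm]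
  refine Finset.sum_congr rfl fun ω _ => ?_
  simp [Finset.sum_ite_eq, Finset.mem_univ]

lemma pm_sum_eq_one (hp : IsPMF p) (X : Ω → α) : ∑ x, pm p X x = 1 := by
  have := exp_eq (p := p) X (fun _ => 1)
  simpa [hp.2] using this

lemma pm_diag_ge (hp : IsPMF p) (X : Ω → α) (ω : Ω) : p ω ≤ pm p X (X ω) := by
  unfold pm
  have : (if X ω = X ω then p ω else 0) = p ω := by simp
  calc p ω = (if X ω = X ω then p ω else 0) := this.symm
    _ ≤ ∑ ω', if X ω' = X ω then p ω' else 0 :=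
      Finset.single_le_sum (f := fun ω' => if X ω' = X ω then p ω' else 0)
        (fun ω' _ => by split <;> simp [hp.1 ω']) (Finset.mem_univ ω)

lemma pm_comp_le (hp : IsPMF p) (X : Ω → α) (f : α → β) (x : α) :
    pm p X x ≤ pm p (fun ω => f (X ω)) (f x) := by
  refine Finset.sum_le_sum fun ω _ => ?_
  by_cases h : X ω = x
  · simp [h]
  · simp [h]; split <;> simp [hp.1 ω]

lemma pm_relabel (f : α → β) (hf : Function.Injective f) (X : Ω → α) (x : α) :
    pm p (fun ω => f (X ω)) (f x) = pm p X x := by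
  refine Finset.sum_congr rfl fun ω _ => ?_
  simp [hf.eq_iff]

lemma pm_marg (T : Ω → α) (V : Ω → β) (v : β) :
    ∑ t, pm p (fun ω => (T ω, V ω)) (t, v) = pm p V v := by
  unfold pm
  rw [Finset.sum_comm]
  refine Finset.sum_congr rfl fun ω _ => ?_
  by_cases h : V ω = v
  · simp [Prod.ext_iff, h, Finset.sum_ite_eq, Finset.mem_univ]
  · simp [Prod.ext_iff, h]

end ITA

section IT2
open Finset
variable {Ω : Type} [Fintype Ω]
variable {α β γ : Type} [Fintype α] [DecidableEq α] [Fintype β] [DecidableEq β]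
  [Fintype γ] [DecidableEq γ] {p : Ω → ℝ}

lemma ent_diag (X : Ω → α) :
    ent p X = -∑ ω, p ω * Real.logb 2 (pm p X (X ω)) := by
  rw [ent, exp_eq X (fun x => Real.logb 2 (pm p X x))]

lemma pm_diag_congr {X : Ω → α} {Y : Ω → β}
    (h : ∀ ω ω', X ω = X ω' ↔ Y ω = Y ω') (ω : Ω) :
    pm p X (X ω) = pm p Y (Y ω) := by
  refine Finset.sum_congr rfl fun ω' _ => ?_
  simp [h ω' ω]

lemma ent_congr {X : Ω → α} {Y : Ω → β}
    (h : ∀ ω ω', X ω = X ω' ↔ Y ω = Y ω') : ent p X = ent p Y := by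
  rw [ent_diag, ent_diag]
  refine congrArg _ (Finset.sum_congr rfl fun ω _ => ?_)
  rw [pm_diag_congr h ω]

/-- Gibbs-type inequality. -/
lemma gibbs {ι : Type} [Fintype ι] (a b : ι → ℝ)
    (ha : ∀ i, 0 ≤ a i) (hsum : ∑ i, a i = 1)
    (hbpos : ∀ i, a i ≠ 0 → 0 < b i)
    (hb1 : ∑ i, (if a i = 0 then 0 else b i) ≤ 1) :
    ∑ i, a i * Real.logb 2 (b i / a i) ≤ 0 := by
  have hlog2 : (0:ℝ) < Real.log 2 := Real.log_pos (by norm_num)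
  have key : ∀ i, a i * Real.log (b i / a i) ≤ (if a i = 0 then 0 else b i) - a i := by
    intro i
    by_cases h : a i = 0
    · simp [h]
    · have hai : 0 < a i := lt_of_le_of_ne (ha i) (Ne.symm h)
      have hbi := hbpos i h
      have hpos : 0 < b i / a i := div_pos hbi hai
      have := Real.log_le_sub_one_of_pos hpos
      have h2 : a i * Real.log (b i / a i) ≤ a i * (b i / a i - 1) :=
        mul_le_mul_of_nonneg_left this (ha i)
      rw [mul_sub, mul_div_cancel₀ _ (ne_of_gt hai), mul_one] at h2
      simpa [h] using h2
  have hsumlog : ∑ i, a i * Real.log (b i / a i) ≤ 0 := by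
    calc ∑ i, a i * Real.log (b i / a i)
        ≤ ∑ i, ((if a i = 0 then 0 else b i) - a i) := Finset.sum_le_sum fun i _ => key i
      _ = (∑ i, (if a i = 0 then 0 else b i)) - ∑ i, a i := Finset.sum_sub_distrib _ _
      _ ≤ 1 - 1 := by rw [hsum]; linarith [hb1]
      _ = 0 := by ring
  have : ∑ i, a i * Real.logb 2 (b i / a i)
      = (∑ i, a i * Real.log (b i / a i)) / Real.log 2 := by
    rw [Finset.sum_div]
    refine Finset.sum_congr rfl fun i _ => ?_
    rw [Real.logb, mul_div_assoc]
  rw [this]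
  exact div_nonpos_of_nonpos_of_nonneg hsumlog (le_of_lt hlog2)

lemma ent_le_log_card (hp : IsPMF p) (X : Ω → α) :
    ent p X ≤ Real.logb 2 (Fintype.card α) := by
  have hcard : 0 < Fintype.card α := by
    by_contra h
    have h0 : IsEmpty α := by
      rw [← Fintype.card_eq_zero_iff]; omega
    have := pm_sum_eq_one hp X
    rw [Finset.univ_eq_empty, Finset.sum_empty] at this
    norm_num at this
  set c : ℝ := (Fintype.card α : ℝ) with hc
  have hcpos : (0:ℝ) < c := by rw [hc]; exact_mod_cast hcard
  have hg := gibbs (pm p X) (fun _ => 1 / c)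
    (pm_nonneg hp X) (pm_sum_eq_one hp X)
    (fun i _ => by positivity)
    (by
      calc ∑ i : α, (if pm p X i = 0 then 0 else 1 / c) ≤ ∑ i : α, 1 / c := by
            refine Finset.sum_le_sum fun i _ => ?_
            split
            · positivity
            · exact le_refl _
        _ = 1 := by
            rw [Finset.sum_const, Finset.card_univ, nsmul_eq_mul]
            field_simp
            exact hc.symm)
  have expand : ∀ x : α, pm p X x * Real.logb 2 ((1/c) / pm p X x)
      = pm p X x * Real.logb 2 (1/c) - pm p X x * Real.logb 2 (pm p X x) := by
    intro x
    by_cases h : pm p X x = 0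
    · simp [h]
    · rw [Real.logb_div (by positivity) h, mul_sub]
  rw [Finset.sum_congr rfl (fun x _ => expand x), Finset.sum_sub_distrib,
    ← Finset.sum_mul, pm_sum_eq_one hp X] at hg
  have : Real.logb 2 (1/c) = - Real.logb 2 c := by
    rw [one_div, Real.logb_inv]
  rw [this] at hg
  rw [ent]
  linarith [hg]

end IT2

section IT3
open Finset
variable {Ω : Type} [Fintype Ω]
variable {α β γ : Type} [Fintype α] [DecidableEq α] [Fintype β] [DecidableEq β]
  [Fintype γ] [DecidableEq γ] {p : Ω → ℝ}

theorem cmi_nonneg (hp : IsPMF p) (X : Ω → α) (Y : Ω → β) (Z : Ω → γ) :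
    0 ≤ cmi p X Y Z := by
  classical
  set a : α × β × γ → ℝ := pm p (fun ω => (X ω, Y ω, Z ω)) with ha_def
  set b : α × β × γ → ℝ := fun t =>
    pm p (fun ω => (X ω, Z ω)) (t.1, t.2.2) * pm p (fun ω => (Y ω, Z ω)) (t.2.1, t.2.2)
      / pm p Z t.2.2 with hb_def
  have hbnn : ∀ t, 0 ≤ b t := fun t =>
    div_nonneg (mul_nonneg (pm_nonneg hp _ _) (pm_nonneg hp _ _)) (pm_nonneg hp _ _)
  -- key identity: cmi = -∑ a log (b/a)
  have hEq : cmi p X Y Z = -∑ t, a t * Real.logb 2 (b t / a t) := by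
    rw [exp_eq (p := p) (fun ω => (X ω, Y ω, Z ω)) (fun t => Real.logb 2 (b t / a t))]
    rw [cmi, ent_diag, ent_diag, ent_diag, ent_diag]
    have key : ∀ ω ∈ Finset.univ (α := Ω),
        p ω * Real.logb 2 (b (X ω, Y ω, Z ω) / a (X ω, Y ω, Z ω)) =
        p ω * Real.logb 2 (pm p (fun ω => (X ω, Z ω)) (X ω, Z ω))
      + p ω * Real.logb 2 (pm p (fun ω => (Y ω, Z ω)) (Y ω, Z ω))
      - p ω * Real.logb 2 (pm p (fun ω => (X ω, Y ω, Z ω)) (X ω, Y ω, Z ω))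
      - p ω * Real.logb 2 (pm p Z (Z ω)) := ?_
    · rw [Finset.sum_congr rfl key, Finset.sum_sub_distrib, Finset.sum_sub_distrib,
        Finset.sum_add_distrib]
      ring
    intro ω _
    by_cases hpω : p ω = 0
    · simp [hpω]
    · have hpω' : 0 < p ω := lt_of_le_of_ne (hp.1 ω) (Ne.symm hpω)
      have h1 : 0 < pm p (fun ω => (X ω, Y ω, Z ω)) (X ω, Y ω, Z ω) :=
        lt_of_lt_of_le hpω' (pm_diag_ge hp _ ω)
      have h2 : 0 < pm p (fun ω => (X ω, Z ω)) (X ω, Z ω) :=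
        lt_of_lt_of_le hpω' (pm_diag_ge hp _ ω)
      have h3 : 0 < pm p (fun ω => (Y ω, Z ω)) (Y ω, Z ω) :=
        lt_of_lt_of_le hpω' (pm_diag_ge hp _ ω)
      have h4 : 0 < pm p Z (Z ω) := lt_of_lt_of_le hpω' (pm_diag_ge hp _ ω)
      have hb : b (X ω, Y ω, Z ω) / a (X ω, Y ω, Z ω)
          = pm p (fun ω => (X ω, Z ω)) (X ω, Z ω) * pm p (fun ω => (Y ω, Z ω)) (Y ω, Z ω)
            / (pm p Z (Z ω) * pm p (fun ω => (X ω, Y ω, Z ω)) (X ω, Y ω, Z ω)) := by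
        rw [hb_def, ha_def]
        dsimp only
        rw [div_div]
      rw [hb, Real.logb_div (by positivity) (by positivity), Real.logb_mul (ne_of_gt h2) (ne_of_gt h3),
        Real.logb_mul (ne_of_gt h4) (ne_of_gt h1)]
      ring
  rw [hEq, le_neg]
  simp only [neg_zero]
  refine gibbs a b (fun t => pm_nonneg hp _ _) (pm_sum_eq_one hp _) ?_ ?_
  · intro t hat
    have hat' : 0 < a t := lt_of_le_of_ne (pm_nonneg hp _ _) (Ne.symm hat)
    have h2 : 0 < pm p (fun ω => (X ω, Z ω)) (t.1, t.2.2) :=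
      lt_of_lt_of_le hat' (pm_comp_le hp (fun ω => (X ω, Y ω, Z ω)) (fun s => (s.1, s.2.2)) t)
    have h3 : 0 < pm p (fun ω => (Y ω, Z ω)) (t.2.1, t.2.2) :=
      lt_of_lt_of_le hat' (pm_comp_le hp (fun ω => (X ω, Y ω, Z ω)) (fun s => (s.2.1, s.2.2)) t)
    have h4 : 0 < pm p Z t.2.2 :=
      lt_of_lt_of_le hat' (pm_comp_le hp (fun ω => (X ω, Y ω, Z ω)) (fun s => s.2.2) t)
    exact div_pos (mul_pos h2 h3) h4
  · calc ∑ t, (if a t = 0 then 0 else b t) ≤ ∑ t, b t := by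
          refine Finset.sum_le_sum fun t _ => ?_
          split
          · exact hbnn t
          · exact le_refl _
      _ = ∑ x, ∑ y, ∑ z, pm p (fun ω => (X ω, Z ω)) (x, z) * pm p (fun ω => (Y ω, Z ω)) (y, z)
            / pm p Z z := by
          rw [Fintype.sum_prod_type]
          exact Finset.sum_congr rfl fun x _ => by rw [Fintype.sum_prod_type]
      _ = ∑ z, ∑ x, ∑ y, pm p (fun ω => (X ω, Z ω)) (x, z) * pm p (fun ω => (Y ω, Z ω)) (y, z)
            / pm p Z z := by
          rw [show (∑ x, ∑ y, ∑ z, pm p (fun ω => (X ω, Z ω)) (x, z) * pm p (fun ω => (Y ω, Z ω)) (y, z)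
            / pm p Z z) = ∑ x, ∑ z, ∑ y, pm p (fun ω => (X ω, Z ω)) (x, z) * pm p (fun ω => (Y ω, Z ω)) (y, z)
            / pm p Z z from Finset.sum_congr rfl fun x _ => Finset.sum_comm]
          exact Finset.sum_comm
      _ = ∑ z, (∑ x, pm p (fun ω => (X ω, Z ω)) (x, z)) * (∑ y, pm p (fun ω => (Y ω, Z ω)) (y, z))
            / pm p Z z := by
          refine Finset.sum_congr rfl fun z _ => ?_
          rw [Finset.sum_mul_sum]
          simp only [Finset.sum_div]
      _ ≤ ∑ z, pm p Z z := by
          refine Finset.sum_le_sum fun z _ => ?_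
          rw [pm_marg X Z z, pm_marg Y Z z]
          by_cases h : pm p Z z = 0
          · simp [h]
          · rw [mul_div_assoc, div_self h, mul_one]
      _ = 1 := pm_sum_eq_one hp Z

end IT3

section IT4
open Finset
variable {Ω : Type} [Fintype Ω]

variable {α β γ δ : Type} [Fintype α] [DecidableEq α] [Fintype β] [DecidableEq β]
  [Fintype γ] [DecidableEq γ] [Fintype δ] [DecidableEq δ] {p : Ω → ℝ}

lemma ent_unit (hp : IsPMF p) : ent p (fun _ : Ω => ()) = 0 := by
  have hpm : pm p (fun _ : Ω => ()) () = 1 := by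
    rw [← hp.2]; unfold pm; simp
  rw [ent]
  simp [hpm]

lemma ent_pair_le_add (hp : IsPMF p) (X : Ω → α) (Y : Ω → β) :
    ent p (fun ω => (X ω, Y ω)) ≤ ent p X + ent p Y := by
  have h := cmi_nonneg hp X Y (fun _ : Ω => ())
  rw [cmi] at h
  have e1 : ent p (fun ω => (X ω, ())) = ent p X :=
    ent_congr (by intro ω ω'; simp)
  have e2 : ent p (fun ω => (Y ω, ())) = ent p Y :=
    ent_congr (by intro ω ω'; simp)
  have e3 : ent p (fun ω => (X ω, Y ω, ())) = ent p (fun ω => (X ω, Y ω)) :=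
    ent_congr (by intro ω ω'; simp)
  rw [e1, e2, e3, ent_unit hp] at h
  linarith

lemma ent_le_pair (hp : IsPMF p) (X : Ω → α) (Y : Ω → β) :
    ent p Y ≤ ent p (fun ω => (X ω, Y ω)) := by
  rw [ent_diag, ent_diag]
  rw [neg_le_neg_iff]
  refine Finset.sum_le_sum fun ω _ => ?_
  by_cases hpω : p ω = 0
  · simp [hpω]
  · have hpω' : 0 < p ω := lt_of_le_of_ne (hp.1 ω) (Ne.symm hpω)
    have h1 : 0 < pm p (fun ω => (X ω, Y ω)) (X ω, Y ω) :=
      lt_of_lt_of_le hpω' (pm_diag_ge hp _ ω)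
    have h2 : pm p (fun ω => (X ω, Y ω)) (X ω, Y ω) ≤ pm p Y (Y ω) :=
      pm_comp_le hp (fun ω => (X ω, Y ω)) Prod.snd _
    refine mul_le_mul_of_nonneg_left ?_ (hp.1 ω)
    exact Real.logb_le_logb_of_le (by norm_num : (1:ℝ) < 2) h1 h2

lemma condIndep_ent (hp : IsPMF p) {X : Ω → α} {Z : Ω → γ} {Y : Ω → β}
    (h : CondIndep p X Z Y) :
    ent p (fun ω => (X ω, Z ω, Y ω)) + ent p Y
      = ent p (fun ω => (X ω, Y ω)) + ent p (fun ω => (Z ω, Y ω)) := by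
  rw [ent_diag, ent_diag, ent_diag, ent_diag, ← neg_add, ← neg_add,
    ← Finset.sum_add_distrib, ← Finset.sum_add_distrib]
  refine congrArg _ (Finset.sum_congr rfl fun ω _ => ?_)
  by_cases hpω : p ω = 0
  · simp [hpω]
  · have hpω' : 0 < p ω := lt_of_le_of_ne (hp.1 ω) (Ne.symm hpω)
    have h1 : 0 < pm p (fun ω => (X ω, Z ω, Y ω)) (X ω, Z ω, Y ω) :=
      lt_of_lt_of_le hpω' (pm_diag_ge hp _ ω)
    have h2 : 0 < pm p Y (Y ω) := lt_of_lt_of_le hpω' (pm_diag_ge hp _ ω)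
    have h3 : 0 < pm p (fun ω => (X ω, Y ω)) (X ω, Y ω) :=
      lt_of_lt_of_le hpω' (pm_diag_ge hp _ ω)
    have h4 : 0 < pm p (fun ω => (Z ω, Y ω)) (Z ω, Y ω) :=
      lt_of_lt_of_le hpω' (pm_diag_ge hp _ ω)
    have := h (X ω) (Z ω) (Y ω)
    have hlog : Real.logb 2 (pm p (fun ω => (X ω, Z ω, Y ω)) (X ω, Z ω, Y ω))
        + Real.logb 2 (pm p Y (Y ω))
        = Real.logb 2 (pm p (fun ω => (X ω, Y ω)) (X ω, Y ω))
        + Real.logb 2 (pm p (fun ω => (Z ω, Y ω)) (Z ω, Y ω)) := by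
      rw [← Real.logb_mul (ne_of_gt h1) (ne_of_gt h2),
        ← Real.logb_mul (ne_of_gt h3) (ne_of_gt h4), this]
    nlinarith [hlog, hpω']

/-- drop second component of the middle variable -/
lemma CondIndep.snd_middle {X : Ω → α} {Z₁ : Ω → γ} {Z₂ : Ω → δ} {Y : Ω → β}
    (h : CondIndep p X (fun ω => (Z₁ ω, Z₂ ω)) Y) : CondIndep p X Z₂ Y := by
  intro x z2 y
  have lhs : pm p (fun ω => (X ω, Z₂ ω, Y ω)) (x, z2, y)
      = ∑ z1, pm p (fun ω => (X ω, (Z₁ ω, Z₂ ω), Y ω)) (x, (z1, z2), y) := by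
    rw [← pm_marg Z₁ (fun ω => (X ω, Z₂ ω, Y ω)) (x, z2, y)]
    refine Finset.sum_congr rfl fun z1 _ => ?_
    exact (pm_relabel (fun t : γ × α × δ × β => (t.2.1, (t.1, t.2.2.1), t.2.2.2))
      (fun s t hst => by
        simp only [Prod.ext_iff] at hst ⊢
        tauto)
      (fun ω => (Z₁ ω, X ω, Z₂ ω, Y ω)) (z1, x, z2, y)).symm
  have rhs : pm p (fun ω => (Z₂ ω, Y ω)) (z2, y)
      = ∑ z1, pm p (fun ω => ((Z₁ ω, Z₂ ω), Y ω)) ((z1, z2), y) := by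
    rw [← pm_marg Z₁ (fun ω => (Z₂ ω, Y ω)) (z2, y)]
    refine Finset.sum_congr rfl fun z1 _ => ?_
    exact (pm_relabel (fun t : γ × δ × β => ((t.1, t.2.1), t.2.2))
      (fun s t hst => by
        simp only [Prod.ext_iff] at hst ⊢
        tauto)
      (fun ω => (Z₁ ω, Z₂ ω, Y ω)) (z1, z2, y)).symm
  rw [lhs, rhs, Finset.sum_mul, Finset.mul_sum]
  refine Finset.sum_congr rfl fun z1 _ => ?_
  exact h x (z1, z2) y

/-- drop first component of the first variable -/
lemma CondIndep.snd_left {X₁ : Ω → α} {X₂ : Ω → δ} {Z : Ω → γ} {Y : Ω → β}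
    (h : CondIndep p (fun ω => (X₁ ω, X₂ ω)) Z Y) : CondIndep p X₂ Z Y := by
  intro x2 z y
  have lhs : pm p (fun ω => (X₂ ω, Z ω, Y ω)) (x2, z, y)
      = ∑ x1, pm p (fun ω => ((X₁ ω, X₂ ω), Z ω, Y ω)) ((x1, x2), z, y) := by
    rw [← pm_marg X₁ (fun ω => (X₂ ω, Z ω, Y ω)) (x2, z, y)]
    refine Finset.sum_congr rfl fun x1 _ => ?_
    exact (pm_relabel (fun t : α × δ × γ × β => ((t.1, t.2.1), t.2.2.1, t.2.2.2))
      (fun s t hst => by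
        simp only [Prod.ext_iff] at hst ⊢
        tauto)
      (fun ω => (X₁ ω, X₂ ω, Z ω, Y ω)) (x1, x2, z, y)).symm
  have rhs : pm p (fun ω => (X₂ ω, Y ω)) (x2, y)
      = ∑ x1, pm p (fun ω => ((X₁ ω, X₂ ω), Y ω)) ((x1, x2), y) := by
    rw [← pm_marg X₁ (fun ω => (X₂ ω, Y ω)) (x2, y)]
    refine Finset.sum_congr rfl fun x1 _ => ?_
    exact (pm_relabel (fun t : α × δ × β => ((t.1, t.2.1), t.2.2))
      (fun s t hst => by
        simp only [Prod.ext_iff] at hst ⊢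
        tauto)
      (fun ω => (X₁ ω, X₂ ω, Y ω)) (x1, x2, y)).symm
  rw [lhs, rhs, Finset.sum_mul, Finset.sum_mul]
  refine Finset.sum_congr rfl fun x1 _ => ?_
  exact h (x1, x2) z y

/-- drop second component of the first variable -/
lemma CondIndep.fst_left {X₁ : Ω → α} {X₂ : Ω → δ} {Z : Ω → γ} {Y : Ω → β}
    (h : CondIndep p (fun ω => (X₁ ω, X₂ ω)) Z Y) : CondIndep p X₁ Z Y := by
  intro x1 z y
  have lhs : pm p (fun ω => (X₁ ω, Z ω, Y ω)) (x1, z, y)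
      = ∑ x2, pm p (fun ω => ((X₁ ω, X₂ ω), Z ω, Y ω)) ((x1, x2), z, y) := by
    rw [← pm_marg X₂ (fun ω => (X₁ ω, Z ω, Y ω)) (x1, z, y)]
    refine Finset.sum_congr rfl fun x2 _ => ?_
    exact (pm_relabel (fun t : δ × α × γ × β => ((t.2.1, t.1), t.2.2.1, t.2.2.2))
      (fun s t hst => by
        simp only [Prod.ext_iff] at hst ⊢
        tauto)
      (fun ω => (X₂ ω, X₁ ω, Z ω, Y ω)) (x2, x1, z, y)).symm
  have rhs : pm p (fun ω => (X₁ ω, Y ω)) (x1, y)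
      = ∑ x2, pm p (fun ω => ((X₁ ω, X₂ ω), Y ω)) ((x1, x2), y) := by
    rw [← pm_marg X₂ (fun ω => (X₁ ω, Y ω)) (x1, y)]
    refine Finset.sum_congr rfl fun x2 _ => ?_
    exact (pm_relabel (fun t : δ × α × β => ((t.2.1, t.1), t.2.2))
      (fun s t hst => by
        simp only [Prod.ext_iff] at hst ⊢
        tauto)
      (fun ω => (X₂ ω, X₁ ω, Y ω)) (x2, x1, y)).symm
  rw [lhs, rhs, Finset.sum_mul, Finset.sum_mul]
  refine Finset.sum_congr rfl fun x2 _ => ?_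
  exact h (x1, x2) z y

end IT4

/-- side-information switching. If `Ẇ → W → (U,S) → Z` is a Markov chain and
`S` takes values in a set of size `q_e`, then `I(U;Z|W) ≤ I(U;Z|Ẇ) + log₂ q_e`. -/
theorem stmt9 {Ω υ ωt ωd ζ σ : Type} [Fintype Ω] [Fintype υ] [DecidableEq υ]
    [Fintype ωt] [DecidableEq ωt] [Fintype ωd] [DecidableEq ωd]
    [Fintype ζ] [DecidableEq ζ] [Fintype σ] [DecidableEq σ]
    (p : Ω → ℝ) (hp : IsPMF p) (qe : ℕ) (hq : Fintype.card σ = qe)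
    (U : Ω → υ) (W : Ω → ωt) (Wdot : Ω → ωd) (Z : Ω → ζ) (S : Ω → σ)
    (hMarkov1 : CondIndep p Wdot (fun ω => (U ω, S ω, Z ω)) W)
    (hMarkov2 : CondIndep p (fun ω => (Wdot ω, W ω)) Z (fun ω => (U ω, S ω))) :
    cmi p U Z W ≤ cmi p U Z Wdot + Real.logb 2 qe := by
  have M1 : CondIndep p Wdot Z W :=
    (CondIndep.snd_middle (Z₁ := S) (Z₂ := Z)
      (CondIndep.snd_middle (Z₁ := U) (Z₂ := fun ω => (S ω, Z ω)) hMarkov1))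
  have M2 : CondIndep p W Z (fun ω => (U ω, S ω)) :=
    CondIndep.snd_left (X₁ := Wdot) (X₂ := W) hMarkov2
  have M3 : CondIndep p Wdot Z (fun ω => (U ω, S ω)) :=
    CondIndep.fst_left (X₁ := Wdot) (X₂ := W) hMarkov2
  have h1a := condIndep_ent hp M1
  have h1b := cmi_nonneg hp Z W Wdot
  rw [cmi] at h1b
  have h2a := cmi_nonneg hp Z S (fun ω => (W ω, U ω))
  rw [cmi] at h2a
  have h2b := condIndep_ent hp M2
  have h2c := condIndep_ent hp M3
  have h2d := ent_le_pair hp S (fun ω => (Z ω, Wdot ω, U ω))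
  have h2f := ent_pair_le_add hp S (fun ω => (Wdot ω, U ω))
  have h2g := ent_le_log_card hp S
  rw [hq] at h2g
  have E1 : ent p (fun ω => (Wdot ω, Z ω, W ω)) = ent p (fun ω => (Z ω, W ω, Wdot ω)) :=
    ent_congr (by intro ω ω'; simp only [Prod.mk.injEq]; tauto)
  have E2 : ent p (fun ω => (Wdot ω, W ω)) = ent p (fun ω => (W ω, Wdot ω)) :=
    ent_congr (by intro ω ω'; simp only [Prod.mk.injEq]; tauto)
  have E3 : ent p (fun ω => (U ω, Z ω, W ω)) = ent p (fun ω => (Z ω, W ω, U ω)) :=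
    ent_congr (by intro ω ω'; simp only [Prod.mk.injEq]; tauto)
  have E4 : ent p (fun ω => (U ω, W ω)) = ent p (fun ω => (W ω, U ω)) :=
    ent_congr (by intro ω ω'; simp only [Prod.mk.injEq]; tauto)
  have E5 : ent p (fun ω => (Z ω, S ω, W ω, U ω)) = ent p (fun ω => (W ω, Z ω, U ω, S ω)) :=
    ent_congr (by intro ω ω'; simp only [Prod.mk.injEq]; tauto)
  have E6 : ent p (fun ω => (S ω, W ω, U ω)) = ent p (fun ω => (W ω, U ω, S ω)) :=
    ent_congr (by intro ω ω'; simp only [Prod.mk.injEq]; tauto)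
  have E7 : ent p (fun ω => (Wdot ω, Z ω, U ω, S ω)) = ent p (fun ω => (S ω, Z ω, Wdot ω, U ω)) :=
    ent_congr (by intro ω ω'; simp only [Prod.mk.injEq]; tauto)
  have E8 : ent p (fun ω => (Wdot ω, U ω, S ω)) = ent p (fun ω => (S ω, Wdot ω, U ω)) :=
    ent_congr (by intro ω ω'; simp only [Prod.mk.injEq]; tauto)
  have E9 : ent p (fun ω => (U ω, Z ω, Wdot ω)) = ent p (fun ω => (Z ω, Wdot ω, U ω)) :=
    ent_congr (by intro ω ω'; simp only [Prod.mk.injEq]; tauto)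
  have E10 : ent p (fun ω => (U ω, Wdot ω)) = ent p (fun ω => (Wdot ω, U ω)) :=
    ent_congr (by intro ω ω'; simp only [Prod.mk.injEq]; tauto)
  rw [cmi, cmi]
  linarith [h1a, h1b, h2a, h2b, h2c, h2d, h2f, h2g,
    E1, E2, E3, E4, E5, E6, E7, E8, E9, E10]
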